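/- Let a₀, b₀ ∈ ℝ with a₀ = b₀ or a₀ = −b₀ and b₀ ≠ 0. Then the functions a(t) = a₀ / (1 − (16/3)·a₀·t) and b(t) = b₀ / (1 − (16/3)·a₀·t) satisfy a(0) = a₀, b(0) = b₀, a′(t) = (4/3)·a(t)² + 4·b(t)², and b′(t) = (16/3)·a(t)·b(t) at every t with (16/3)·a₀·t < 1. -/

import Mathlib

lemma deriv_aux (c k : ℝ) (t : ℝ) (h : 1 - k * t ≠ 0) :
    HasDerivAt (fun t => c / (1 - k * t)) (c * k / (1 - k * t) ^ 2) t := by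
  have h1 : HasDerivAt (fun t : ℝ => 1 - k * t) (-k) t := by
    simpa using ((hasDerivAt_id t).const_mul k).const_sub 1
  have := (hasDerivAt_const t c).div h1 h
  exact this.congr_deriv (by ring)

/-- For `a₀ = ±b₀ ≠ 0` the pair `a(t) = a₀/(1 − (16/3)a₀t)`,
`b(t) = b₀/(1 − (16/3)a₀t)` solves the invariant evolution system
`a′ = (4/3)a² + 4b²`, `b′ = (16/3)ab` wherever `(16/3)a₀t < 1`. -/
theorem solution_on_degenerate_quartic (a₀ b₀ : ℝ) (hb₀ : b₀ ≠ 0)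
    (hab : a₀ = b₀ ∨ a₀ = -b₀) (a b : ℝ → ℝ)
    (hadef : a = fun t => a₀ / (1 - (16 / 3) * a₀ * t))
    (hbdef : b = fun t => b₀ / (1 - (16 / 3) * a₀ * t)) :
    a 0 = a₀ ∧ b 0 = b₀ ∧
    ∀ t : ℝ, (16 / 3) * a₀ * t < 1 →
      HasDerivAt a ((4 / 3) * (a t) ^ 2 + 4 * (b t) ^ 2) t ∧
      HasDerivAt b ((16 / 3) * a t * b t) t := by
  subst hadef hbdef
  refine ⟨by simp, by simp, fun t ht => ?_⟩
  set k : ℝ := (16 / 3) * a₀ with hk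
  have hD : 1 - k * t ≠ 0 := by
    have : k * t < 1 := by simpa [hk, mul_assoc] using ht
    linarith
  have hsq : a₀ ^ 2 = b₀ ^ 2 := by rcases hab with h | h <;> subst h <;> ring
  constructor
  · convert deriv_aux a₀ k t hD using 1
    show 4 / 3 * (a₀ / (1 - k * t)) ^ 2 + 4 * (b₀ / (1 - k * t)) ^ 2 = a₀ * k / (1 - k * t) ^ 2
    have h1 : 4 / 3 * (a₀ / (1 - k * t)) ^ 2 + 4 * (b₀ / (1 - k * t)) ^ 2
        = (4 / 3 * a₀ ^ 2 + 4 * b₀ ^ 2) / (1 - k * t) ^ 2 := by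
      generalize (1 - k * t) = D
      rw [div_pow, div_pow]; ring
    have h2 : 4 / 3 * a₀ ^ 2 + 4 * b₀ ^ 2 = a₀ * k := by
      rw [hk]; nlinarith [hsq]
    rw [h1, h2]
  · convert deriv_aux b₀ k t hD using 1
    show 16 / 3 * (a₀ / (1 - k * t)) * (b₀ / (1 - k * t)) = b₀ * k / (1 - k * t) ^ 2
    generalize (1 - k * t) = D
    rw [hk]
    ring
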